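/- Combining Fano's inequality with the two mutual-information bounds: any mechanism Y satisfying perfect privacy with respect to X_S (and the Markov chain X_S → X → Y) has error probability P_e = P(Y ≠ A) satisfying h(P_e) ≥ H(A) − min{H(A_L̄ | A_{L∩S}), H(A | X_S)}. -/

import Mathlib

open Finset

/-- Binary entropy function. -/
noncomputable def binEnt (p : ℝ) : ℝ := -(p * Real.log p) - (1 - p) * Real.log (1 - p)

section helpers
open Real


/-- Log-sum inequality. -/
lemma log_sum_ineq {ι : Type*} (t : Finset ι) (a b : ι → ℝ)
    (ha : ∀ i ∈ t, 0 ≤ a i) (hb : ∀ i ∈ t, 0 ≤ b i)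
    (hab : ∀ i ∈ t, b i = 0 → a i = 0) :
    (∑ i ∈ t, a i) * Real.log ((∑ i ∈ t, a i) / (∑ i ∈ t, b i))
      ≤ ∑ i ∈ t, a i * Real.log (a i / b i) := by
  classical
  set B := ∑ i ∈ t, b i with hB
  rcases eq_or_lt_of_le (Finset.sum_nonneg hb) with h0 | hBpos
  · -- B = 0 : all b = 0 hence all a = 0
    have hb0 : ∀ i ∈ t, b i = 0 := by
      intro i hi
      exact (Finset.sum_eq_zero_iff_of_nonneg hb).mp h0.symm i hi
    have ha0 : ∀ i ∈ t, a i = 0 := fun i hi => hab i hi (hb0 i hi)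
    rw [Finset.sum_eq_zero ha0, Finset.sum_eq_zero (fun i hi => by rw [ha0 i hi]; ring)]
    simp
  · -- B > 0
    have hconv := Real.convexOn_mul_log
    set w : ι → ℝ := fun i => b i / B with hw
    set z : ι → ℝ := fun i => if b i = 0 then 0 else a i / b i with hz
    have hw0 : ∀ i ∈ t, 0 ≤ w i := fun i hi => div_nonneg (hb i hi) hBpos.le
    have hw1 : ∑ i ∈ t, w i = 1 := by
      rw [hw]; rw [← Finset.sum_div]; exact div_self hBpos.ne'
    have hzmem : ∀ i ∈ t, z i ∈ Set.Ici (0:ℝ) := by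
      intro i hi
      simp only [hz, Set.mem_Ici]
      split
      · exact le_refl 0
      · exact div_nonneg (ha i hi) (hb i hi)
    have hjen := hconv.map_sum_le hw0 hw1 hzmem
    have hsum : ∑ i ∈ t, w i • z i = (∑ i ∈ t, a i) / B := by
      rw [Finset.sum_div]
      apply Finset.sum_congr rfl
      intro i hi
      simp only [hw, hz, smul_eq_mul]
      by_cases h : b i = 0
      · simp [h, hab i hi h]
      · rw [if_neg h]
        rw [div_mul_div_comm, mul_comm (b i), mul_div_mul_right _ _ h]
    rw [hsum] at hjen
    have hterm : ∀ i ∈ t, w i • ((z i) * Real.log (z i)) = (a i) / B * Real.log (a i / b i) := by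
      intro i hi
      simp only [hw, hz, smul_eq_mul]
      by_cases h : b i = 0
      · simp [h, hab i hi h]
      · have : a i / b i * Real.log (a i / b i) * (b i / B) = a i / B * Real.log (a i / b i) := by
          field_simp
        simp [h]; linarith [this]
    rw [Finset.sum_congr rfl hterm] at hjen
    have := mul_le_mul_of_nonneg_left hjen hBpos.le
    calc (∑ i ∈ t, a i) * Real.log ((∑ i ∈ t, a i) / B)
        = B * ((∑ i ∈ t, a i) / B * Real.log ((∑ i ∈ t, a i) / B)) := by
          have hB0 : B ≠ 0 := hBpos.ne'
          field_simp
      _ ≤ B * (∑ i ∈ t, a i / B * Real.log (a i / b i)) := this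
      _ = ∑ i ∈ t, a i * Real.log (a i / b i) := by
          rw [Finset.mul_sum]
          apply Finset.sum_congr rfl
          intro i hi
          have hB0 : B ≠ 0 := hBpos.ne'
          field_simp

/-- Unnormalized submodularity / subadditivity of entropy for a 2D array. -/
lemma ent_submod {ι κ : Type*} (I : Finset ι) (K : Finset κ) (t : ι → κ → ℝ)
    (ht : ∀ i ∈ I, ∀ k ∈ K, 0 ≤ t i k) :
    (∑ i ∈ I, ∑ k ∈ K, Real.negMulLog (t i k)) + Real.negMulLog (∑ i ∈ I, ∑ k ∈ K, t i k)
      ≤ (∑ i ∈ I, Real.negMulLog (∑ k ∈ K, t i k))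
        + ∑ k ∈ K, Real.negMulLog (∑ i ∈ I, t i k) := by
  classical
  set R : ι → ℝ := fun i => ∑ k ∈ K, t i k with hR
  set C : κ → ℝ := fun k => ∑ i ∈ I, t i k with hC
  set T : ℝ := ∑ i ∈ I, ∑ k ∈ K, t i k with hT
  have hR0 : ∀ i ∈ I, 0 ≤ R i := fun i hi => Finset.sum_nonneg (fun k hk => ht i hi k hk)
  have hC0 : ∀ k ∈ K, 0 ≤ C k := fun k hk => Finset.sum_nonneg (fun i hi => ht i hi k hk)
  have hT0 : 0 ≤ T := Finset.sum_nonneg (fun i hi => hR0 i hi)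
  have htR : ∀ i ∈ I, ∀ k ∈ K, t i k ≤ R i := by
    intro i hi k hk
    exact Finset.single_le_sum (fun k' hk' => ht i hi k' hk') hk
  have htC : ∀ i ∈ I, ∀ k ∈ K, t i k ≤ C k := by
    intro i hi k hk
    exact Finset.single_le_sum (f := fun i' => t i' k) (fun i' hi' => ht i' hi' k hk) hi
  have hRT : ∀ i ∈ I, R i ≤ T := by
    intro i hi
    exact Finset.single_le_sum (f := R) (fun i' hi' => hR0 i' hi') hi
  rcases eq_or_lt_of_le hT0 with h0 | hTpos
  · -- T = 0: everything vanishes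
    have hRz : ∀ i ∈ I, R i = 0 := by
      intro i hi
      exact (Finset.sum_eq_zero_iff_of_nonneg hR0).mp h0.symm i hi
    have htz : ∀ i ∈ I, ∀ k ∈ K, t i k = 0 := by
      intro i hi k hk
      have := (Finset.sum_eq_zero_iff_of_nonneg (fun k' hk' => ht i hi k' hk')).mp (hRz i hi)
      exact this k hk
    have hCz : ∀ k ∈ K, C k = 0 := by
      intro k hk
      exact Finset.sum_eq_zero (fun i hi => htz i hi k hk)
    have e1 : (∑ i ∈ I, ∑ k ∈ K, Real.negMulLog (t i k)) = 0 :=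
      Finset.sum_eq_zero (fun i hi => Finset.sum_eq_zero (fun k hk => by rw [htz i hi k hk]; simp))
    have e2 : (∑ i ∈ I, Real.negMulLog (R i)) = 0 :=
      Finset.sum_eq_zero (fun i hi => by rw [hRz i hi]; simp)
    have e3 : (∑ k ∈ K, Real.negMulLog (C k)) = 0 :=
      Finset.sum_eq_zero (fun k hk => by rw [hCz k hk]; simp)
    rw [← hT, ← h0, e1] at *
    have e2' : ∑ i ∈ I, Real.negMulLog (∑ k ∈ K, t i k) = 0 := e2
    have e3' : ∑ k ∈ K, Real.negMulLog (∑ i ∈ I, t i k) = 0 := e3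
    simp [e2', e3']
  · -- T > 0
    have key := log_sum_ineq (I ×ˢ K) (fun p => t p.1 p.2) (fun p => R p.1 * C p.2 / T)
      (by intro p hp; rw [Finset.mem_product] at hp; exact ht p.1 hp.1 p.2 hp.2)
      (by intro p hp; rw [Finset.mem_product] at hp
          exact div_nonneg (mul_nonneg (hR0 p.1 hp.1) (hC0 p.2 hp.2)) hT0)
      (by intro p hp hz; rw [Finset.mem_product] at hp
          rcases mul_eq_zero.mp (by
            have := div_eq_zero_iff.mp hz
            rcases this with h | h
            · exact h
            · exact absurd h hTpos.ne') with h | h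
          · linarith [htR p.1 hp.1 p.2 hp.2, ht p.1 hp.1 p.2 hp.2]
          · linarith [htC p.1 hp.1 p.2 hp.2, ht p.1 hp.1 p.2 hp.2])
    have hsa : ∑ p ∈ I ×ˢ K, t p.1 p.2 = T := by
      rw [hT, Finset.sum_product]
    have hCT : ∑ k ∈ K, C k = T := by
      rw [hT, Finset.sum_comm]
    have hsb : ∑ p ∈ I ×ˢ K, R p.1 * C p.2 / T = T := by
      rw [Finset.sum_product]
      have : ∀ i ∈ I, ∑ k ∈ K, R i * C k / T = R i * T / T := by
        intro i hi
        rw [← Finset.sum_div, ← Finset.mul_sum, hCT]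
      rw [Finset.sum_congr rfl this]
      have : ∀ i ∈ I, R i * T / T = R i := by
        intro i _; field_simp
      rw [Finset.sum_congr rfl this]
    rw [hsa, hsb, div_self hTpos.ne', Real.log_one, mul_zero] at key
    -- expand each term
    have hterm : ∀ p ∈ I ×ˢ K, t p.1 p.2 * Real.log (t p.1 p.2 / (R p.1 * C p.2 / T))
        = t p.1 p.2 * Real.log (t p.1 p.2) - t p.1 p.2 * Real.log (R p.1)
          - t p.1 p.2 * Real.log (C p.2) + t p.1 p.2 * Real.log T := by
      intro p hp
      rw [Finset.mem_product] at hp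
      rcases eq_or_lt_of_le (ht p.1 hp.1 p.2 hp.2) with hz | hpos
      · rw [← hz]; ring
      · have hRpos : 0 < R p.1 := lt_of_lt_of_le hpos (htR p.1 hp.1 p.2 hp.2)
        have hCpos : 0 < C p.2 := lt_of_lt_of_le hpos (htC p.1 hp.1 p.2 hp.2)
        rw [Real.log_div hpos.ne' (by positivity), Real.log_div (by positivity) hTpos.ne',
          Real.log_mul hRpos.ne' hCpos.ne']
        ring
    rw [Finset.sum_congr rfl hterm] at key
    rw [Finset.sum_add_distrib, Finset.sum_sub_distrib, Finset.sum_sub_distrib] at key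
    have e1 : ∑ p ∈ I ×ˢ K, t p.1 p.2 * Real.log (t p.1 p.2)
        = ∑ i ∈ I, ∑ k ∈ K, t i k * Real.log (t i k) := by rw [Finset.sum_product]
    have e2 : ∑ p ∈ I ×ˢ K, t p.1 p.2 * Real.log (R p.1) = ∑ i ∈ I, R i * Real.log (R i) := by
      rw [Finset.sum_product]
      apply Finset.sum_congr rfl
      intro i _
      show ∑ k ∈ K, t i k * Real.log (R i) = _
      rw [← Finset.sum_mul]
    have e3 : ∑ p ∈ I ×ˢ K, t p.1 p.2 * Real.log (C p.2) = ∑ k ∈ K, C k * Real.log (C k) := by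
      rw [Finset.sum_product_right]
      apply Finset.sum_congr rfl
      intro k _
      show ∑ i ∈ I, t i k * Real.log (C k) = _
      rw [← Finset.sum_mul]
    have e4 : ∑ p ∈ I ×ˢ K, t p.1 p.2 * Real.log T = T * Real.log T := by
      rw [← Finset.sum_mul, hsa]
    rw [e1, e2, e3, e4] at key
    -- convert to negMulLog
    simp only [Real.negMulLog, neg_mul] at *
    have g1 : ∑ i ∈ I, ∑ k ∈ K, -(t i k * Real.log (t i k))
        = -∑ i ∈ I, ∑ k ∈ K, t i k * Real.log (t i k) := by
      rw [← Finset.sum_neg_distrib]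
      apply Finset.sum_congr rfl
      intro i _
      rw [← Finset.sum_neg_distrib]
    have g2 : ∑ i ∈ I, -(R i * Real.log (R i)) = -∑ i ∈ I, R i * Real.log (R i) :=
      by rw [← Finset.sum_neg_distrib]
    have g3 : ∑ k ∈ K, -(C k * Real.log (C k)) = -∑ k ∈ K, C k * Real.log (C k) :=
      by rw [← Finset.sum_neg_distrib]
    rw [g1, g2, g3]
    linarith [key]


lemma negMulLog_add_le'' {u v : ℝ} (hu : 0 ≤ u) (hv : 0 ≤ v) :
    Real.negMulLog (u + v) ≤ Real.negMulLog u + Real.negMulLog v := by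
  have h1 : u * Real.log u ≤ u * Real.log (u + v) := by
    rcases eq_or_lt_of_le hu with h | h
    · rw [← h]; simp
    · exact mul_le_mul_of_nonneg_left (Real.log_le_log h (by linarith)) hu
  have h2 : v * Real.log v ≤ v * Real.log (u + v) := by
    rcases eq_or_lt_of_le hv with h | h
    · rw [← h]; simp
    · exact mul_le_mul_of_nonneg_left (Real.log_le_log h (by linarith)) hv
  simp only [Real.negMulLog, neg_mul]
  nlinarith [h1, h2]

lemma binEnt_eq (p : ℝ) : binEnt p = Real.negMulLog p + Real.negMulLog (1 - p) := by
  simp only [binEnt, Real.negMulLog]; ring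

lemma binEnt_nonneg {p : ℝ} (h0 : 0 ≤ p) (h1 : p ≤ 1) : 0 ≤ binEnt p := by
  rw [binEnt_eq]
  have := Real.negMulLog_nonneg h0 h1
  have := Real.negMulLog_nonneg (by linarith : (0:ℝ) ≤ 1 - p) (by linarith)
  linarith

lemma mul_negMulLog_div {u m : ℝ} (hu : 0 ≤ u) (hm : 0 < m) :
    m * Real.negMulLog (u / m) = Real.negMulLog u + u * Real.log m := by
  rcases eq_or_lt_of_le hu with h | h
  · rw [← h]; simp
  · rw [Real.negMulLog, Real.negMulLog, Real.log_div h.ne' hm.ne']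
    field_simp
    ring

lemma mul_binEnt_div {a m : ℝ} (ha : 0 ≤ a) (ham : a ≤ m) :
    m * binEnt (a / m) = Real.negMulLog a + Real.negMulLog (m - a) - Real.negMulLog m := by
  rcases eq_or_lt_of_le (le_trans ha ham) with h | hm
  · have ha0 : a = 0 := le_antisymm (by linarith) ha
    rw [← h, ha0]
    simp [binEnt]
  · rw [binEnt_eq]
    have h1m : 1 - a / m = (m - a) / m := by field_simp
    rw [h1m, mul_add, mul_negMulLog_div ha hm, mul_negMulLog_div (by linarith) hm]
    have : Real.negMulLog m = -(m * Real.log m) := by rw [Real.negMulLog]; ring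
    rw [this]
    ring

/-- 2×2 Fano-type inequality. -/
lemma fano4 {e0 e1 f0 f1 : ℝ} (h1 : 0 ≤ e0) (h2 : 0 ≤ e1) (h3 : 0 ≤ f0) (h4 : 0 ≤ f1)
    (hs : e0 + e1 + f0 + f1 = 1) :
    (Real.negMulLog e0 + Real.negMulLog f0 - Real.negMulLog (e0 + f0))
      + (Real.negMulLog f1 + Real.negMulLog e1 - Real.negMulLog (f1 + e1))
      ≤ binEnt (e0 + e1) := by
  have H := ent_submod (univ : Finset Bool) (univ : Finset Bool)
    (fun y k => bif y then (bif k then e1 else f1) else (bif k then e0 else f0))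
    (by intro y _ k _; rcases y <;> rcases k <;> simpa)
  simp only [Fintype.sum_bool, cond_true, cond_false] at H
  have ht : e1 + f1 + (e0 + f0) = 1 := by linarith
  rw [ht] at H
  simp only [Real.negMulLog_one] at H
  have h1f : (1 : ℝ) - (e0 + e1) = f1 + f0 := by linarith
  rw [binEnt_eq, h1f]
  have hcomm1 : Real.negMulLog (f1 + e1) = Real.negMulLog (e1 + f1) := by rw [add_comm]
  have hcomm2 : Real.negMulLog (e0 + e1) = Real.negMulLog (e1 + e0) := by rw [add_comm]
  linarith [H]

/-- Key inequality: h(P_e) ≥ h(P(A=1)) - H(A|X_S) under perfect privacy. -/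
lemma key_ineq {S : Type} [Fintype S] (c w : S → Bool → ℝ)
    (hc0 : ∀ s y, 0 ≤ c s y) (hcw : ∀ s y, c s y ≤ w s y)
    (htot : ∑ s, ∑ y, w s y = 1)
    (hprod : ∀ s y, w s y = (∑ s', w s' y) * (∑ y', w s y')) :
    binEnt ((∑ s, c s false) + ((∑ s, w s true) - ∑ s, c s true))
      ≥ binEnt (∑ s, ∑ y, c s y)
        - ∑ s, (Real.negMulLog (∑ y, c s y)
            + Real.negMulLog ((∑ y, w s y) - ∑ y, c s y)
            - Real.negMulLog (∑ y, w s y)) := by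
  classical
  have hcyle : ∀ y : Bool, (∑ s, c s y) ≤ ∑ s, w s y :=
    fun y => Finset.sum_le_sum (fun s _ => hcw s y)
  have hcy0 : ∀ y : Bool, 0 ≤ ∑ s, c s y :=
    fun y => Finset.sum_nonneg (fun s _ => hc0 s y)
  have hw0 : ∀ s y, 0 ≤ w s y := fun s y => le_trans (hc0 s y) (hcw s y)
  have hm1 : (∑ s, w s false) + (∑ s, w s true) = 1 := by
    have : ∑ y, ∑ s, w s y = 1 := by rw [Finset.sum_comm]; exact htot
    rw [Fintype.sum_bool] at this
    linarith
  -- Step A : Fano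
  have stepA : binEnt ((∑ s, c s false) + ((∑ s, w s true) - ∑ s, c s true))
      ≥ (Real.negMulLog (∑ s, c s false)
          + Real.negMulLog ((∑ s, w s false) - ∑ s, c s false)
          - Real.negMulLog (∑ s, w s false))
        + (Real.negMulLog (∑ s, c s true)
          + Real.negMulLog ((∑ s, w s true) - ∑ s, c s true)
          - Real.negMulLog (∑ s, w s true)) := by
    have h := fano4 (e0 := ∑ s, c s false) (e1 := (∑ s, w s true) - ∑ s, c s true)
      (f0 := (∑ s, w s false) - ∑ s, c s false) (f1 := ∑ s, c s true)
      (hcy0 false) (by linarith [hcyle true]) (by linarith [hcyle false]) (hcy0 true)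
      (by linarith [hm1])
    have e1 : (∑ s, c s false) + ((∑ s, w s false) - ∑ s, c s false) = ∑ s, w s false := by
      ring
    have e2 : (∑ s, c s true) + ((∑ s, w s true) - ∑ s, c s true) = ∑ s, w s true := by
      ring
    rw [e1, e2] at h
    linarith [h]
  -- Step B1 : submodularity for c
  have hB1 := ent_submod (univ : Finset S) (univ : Finset Bool) c
    (fun s _ y _ => hc0 s y)
  -- Step B2 : submodularity for w - c
  have hB2 := ent_submod (univ : Finset S) (univ : Finset Bool) (fun s y => w s y - c s y)
    (fun s _ y _ => sub_nonneg.mpr (hcw s y))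
  have hd_tot : ∑ s, ∑ y, (w s y - c s y) = 1 - ∑ s, ∑ y, c s y := by
    rw [← htot, ← Finset.sum_sub_distrib]
    apply Finset.sum_congr rfl
    intro s _
    rw [← Finset.sum_sub_distrib]
  have hd_row : ∀ s, ∑ y, (w s y - c s y) = (∑ y, w s y) - ∑ y, c s y := by
    intro s; rw [← Finset.sum_sub_distrib]
  have hd_col : ∀ y : Bool, ∑ s, (w s y - c s y) = (∑ s, w s y) - ∑ s, c s y := by
    intro y; rw [← Finset.sum_sub_distrib]
  rw [hd_tot] at hB2
  rw [Finset.sum_congr rfl (fun s _ => congrArg Real.negMulLog (hd_row s))] at hB2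
  rw [Finset.sum_congr rfl (fun y _ => congrArg Real.negMulLog (hd_col y))] at hB2
  -- Step B3 : monotonicity
  have hB3 : ∑ s, ∑ y, Real.negMulLog (w s y)
      ≤ (∑ s, ∑ y, Real.negMulLog (c s y))
        + ∑ s, ∑ y, Real.negMulLog (w s y - c s y) := by
    rw [← Finset.sum_add_distrib]
    apply Finset.sum_le_sum
    intro s _
    rw [← Finset.sum_add_distrib]
    apply Finset.sum_le_sum
    intro y _
    have h := negMulLog_add_le'' (hc0 s y) (sub_nonneg.mpr (hcw s y))
    have e : c s y + (w s y - c s y) = w s y := by ring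
    rw [e] at h
    exact h
  -- Step B4 : independence
  have hB4 : ∑ s, ∑ y, Real.negMulLog (w s y)
      = (∑ y, Real.negMulLog (∑ s, w s y)) + ∑ s, Real.negMulLog (∑ y, w s y) := by
    have hstep : ∀ s, ∑ y, Real.negMulLog (w s y)
        = (∑ y', w s y') * (∑ y, Real.negMulLog (∑ s', w s' y))
          + Real.negMulLog (∑ y', w s y') := by
      intro s
      have h1 : ∀ y : Bool, Real.negMulLog (w s y)
          = (∑ y', w s y') * Real.negMulLog (∑ s', w s' y)
            + (∑ s', w s' y) * Real.negMulLog (∑ y', w s y') := by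
        intro y
        rw [hprod s y, Real.negMulLog_mul]
      rw [Finset.sum_congr rfl (fun y _ => h1 y)]
      rw [Finset.sum_add_distrib, ← Finset.mul_sum, ← Finset.sum_mul]
      have : ∑ y : Bool, ∑ s', w s' y = 1 := by rw [Finset.sum_comm]; exact htot
      rw [this, one_mul]
    rw [Finset.sum_congr rfl (fun s _ => hstep s)]
    rw [Finset.sum_add_distrib, ← Finset.sum_mul, htot, one_mul]
  -- expand sums over Bool in stepA-relevant places of hB1/hB2
  rw [Fintype.sum_bool] at hB1 hB2
  -- combine everything
  rw [ge_iff_le, binEnt_eq (∑ s, ∑ y, c s y), sub_le_iff_le_add]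
  have hsplit : ∑ s, (Real.negMulLog (∑ y, c s y)
      + Real.negMulLog ((∑ y, w s y) - ∑ y, c s y)
      - Real.negMulLog (∑ y, w s y))
      = ((∑ s, Real.negMulLog (∑ y, c s y))
        + ∑ s, Real.negMulLog ((∑ y, w s y) - ∑ y, c s y))
        - ∑ s, Real.negMulLog (∑ y, w s y) := by
    rw [Finset.sum_sub_distrib, Finset.sum_add_distrib]
  rw [hsplit]
  rw [Fintype.sum_bool] at hB4
  linarith [stepA, hB1, hB2, hB3, hB4]

end helpers

open Real

/-- Fiberwise decomposition of a filtered sum. -/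
lemma sum_fiber_filter {Ξ S : Type} [Fintype Ξ] [Fintype S] [DecidableEq S]
    (σ : Ξ → S) (f : Ξ → ℝ) (Q : Ξ → Prop) [DecidablePred Q] :
    ∑ s, ∑ x ∈ univ.filter (fun x => σ x = s ∧ Q x), f x = ∑ x ∈ univ.filter Q, f x := by
  rw [← Finset.sum_fiberwise (univ.filter Q) σ f]
  apply Finset.sum_congr rfl
  intro s _
  congr 1
  rw [Finset.filter_filter]
  exact Finset.filter_congr (fun x _ => and_comm)

lemma sum_filter_restrict {Ξ S : Type} [Fintype Ξ] [Fintype S] [DecidableEq S]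
    (σ : Ξ → S) (f : Ξ → ℝ) (Q : Ξ → Prop) [DecidablePred Q] (R : S → Prop) [DecidablePred R]
    (hQR : ∀ x, Q x → R (σ x)) :
    ∑ x ∈ univ.filter Q, f x
      = ∑ s ∈ univ.filter R, ∑ x ∈ univ.filter (fun x => σ x = s ∧ Q x), f x := by
  rw [← sum_fiber_filter σ f Q]
  symm
  apply Finset.sum_subset (Finset.filter_subset R univ)
  intro s _ hs
  apply Finset.sum_eq_zero
  intro x hx
  rw [Finset.mem_filter] at hx
  exfalso
  apply (by simpa using hs : ¬ R s)
  rw [← hx.2.1]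
  exact hQR x hx.2.2

/-- Combining Fano's inequality with the two mutual-information bounds:
for A = A_L̄ · A_{L∩S} (A_L̄ = β(X), A_{L∩S} = γ(X_S), X_S = σ(X)), any binary release Y
independent of X_S (with the Markov chain X_S → X → Y) has error P_e = P(Y ≠ A) with
h(P_e) ≥ H(A) − min{H(A_L̄ | A_{L∩S}), H(A | X_S)}. -/
theorem stmt10 {Ξ S : Type} [Fintype Ξ] [Fintype S] [DecidableEq S]
    (p : Ξ → Bool → ℝ) (σ : Ξ → S) (β : Ξ → Bool) (γ : S → Bool)
    (hp : ∀ x y, 0 ≤ p x y) (hsum : ∑ x, ∑ y, p x y = 1)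
    (hpriv : ∀ (y : Bool) (s : S),
      (∑ x ∈ univ.filter (fun x => σ x = s), p x y)
        = (∑ x, p x y) * (∑ x ∈ univ.filter (fun x => σ x = s), ∑ y', p x y')) :
    binEnt (∑ x, ∑ y, if y ≠ (β x && γ (σ x)) then p x y else 0)
      ≥ binEnt (∑ x ∈ univ.filter (fun x => (β x && γ (σ x)) = true), ∑ y, p x y)
        - min
          (∑ b : Bool, (∑ x ∈ univ.filter (fun x => γ (σ x) = b), ∑ y, p x y) *
            binEnt ((∑ x ∈ univ.filter (fun x => γ (σ x) = b ∧ β x = true), ∑ y, p x y)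
              / (∑ x ∈ univ.filter (fun x => γ (σ x) = b), ∑ y, p x y)))
          (∑ s, (∑ x ∈ univ.filter (fun x => σ x = s), ∑ y, p x y) *
            binEnt ((∑ x ∈ univ.filter (fun x => σ x = s ∧ (β x && γ (σ x)) = true), ∑ y, p x y)
              / (∑ x ∈ univ.filter (fun x => σ x = s), ∑ y, p x y))) := by
  -- notation
  have hc0 : ∀ (s : S) (y : Bool),
      0 ≤ ∑ x ∈ univ.filter (fun x => σ x = s ∧ (β x && γ (σ x)) = true), p x y :=
    fun s y => Finset.sum_nonneg (fun x _ => hp x y)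
  have hcw : ∀ (s : S) (y : Bool),
      (∑ x ∈ univ.filter (fun x => σ x = s ∧ (β x && γ (σ x)) = true), p x y)
        ≤ ∑ x ∈ univ.filter (fun x => σ x = s), p x y := by
    intro s y
    apply Finset.sum_le_sum_of_subset_of_nonneg
    · exact Finset.monotone_filter_right univ (fun x _ hx => hx.1)
    · intro x _ _; exact hp x y
  have htot : ∑ s, ∑ y, (∑ x ∈ univ.filter (fun x => σ x = s), p x y) = 1 := by
    have h1 : ∀ s : S, ∑ y, (∑ x ∈ univ.filter (fun x => σ x = s), p x y)
        = ∑ x ∈ univ.filter (fun x => σ x = s), ∑ y, p x y :=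
      fun s => Finset.sum_comm
    rw [Finset.sum_congr rfl (fun s _ => h1 s)]
    rw [Finset.sum_fiberwise univ σ (fun x => ∑ y, p x y)]
    exact hsum
  have hprod : ∀ (s : S) (y : Bool),
      (∑ x ∈ univ.filter (fun x => σ x = s), p x y)
        = (∑ s', ∑ x ∈ univ.filter (fun x => σ x = s'), p x y)
          * (∑ y', ∑ x ∈ univ.filter (fun x => σ x = s), p x y') := by
    intro s y
    have h1 : ∑ s', (∑ x ∈ univ.filter (fun x => σ x = s'), p x y) = ∑ x, p x y :=
      Finset.sum_fiberwise univ σ (fun x => p x y)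
    have h2 : ∑ y', (∑ x ∈ univ.filter (fun x => σ x = s), p x y')
        = ∑ x ∈ univ.filter (fun x => σ x = s), ∑ y', p x y' := Finset.sum_comm
    rw [h1, h2]
    exact hpriv y s
  have key : binEnt ((∑ s, ∑ x ∈ univ.filter (fun x => σ x = s ∧ (β x && γ (σ x)) = true), p x false)
        + ((∑ s, ∑ x ∈ univ.filter (fun x => σ x = s), p x true)
          - ∑ s, ∑ x ∈ univ.filter (fun x => σ x = s ∧ (β x && γ (σ x)) = true), p x true))
      ≥ binEnt (∑ s, ∑ y, ∑ x ∈ univ.filter (fun x => σ x = s ∧ (β x && γ (σ x)) = true), p x y)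
        - ∑ s, (Real.negMulLog (∑ y, ∑ x ∈ univ.filter (fun x => σ x = s ∧ (β x && γ (σ x)) = true), p x y)
            + Real.negMulLog ((∑ y, ∑ x ∈ univ.filter (fun x => σ x = s), p x y)
              - ∑ y, ∑ x ∈ univ.filter (fun x => σ x = s ∧ (β x && γ (σ x)) = true), p x y)
            - Real.negMulLog (∑ y, ∑ x ∈ univ.filter (fun x => σ x = s), p x y)) :=
    key_ineq (fun s y => ∑ x ∈ univ.filter (fun x => σ x = s ∧ (β x && γ (σ x)) = true), p x y)
      (fun s y => ∑ x ∈ univ.filter (fun x => σ x = s), p x y) hc0 hcw htot hprod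
  -- rewrite Pe
  have hPe : (∑ x, ∑ y, if y ≠ (β x && γ (σ x)) then p x y else 0)
      = (∑ s, ∑ x ∈ univ.filter (fun x => σ x = s ∧ (β x && γ (σ x)) = true), p x false)
        + ((∑ s, ∑ x ∈ univ.filter (fun x => σ x = s), p x true)
          - ∑ s, ∑ x ∈ univ.filter (fun x => σ x = s ∧ (β x && γ (σ x)) = true), p x true) := by
    rw [Finset.sum_comm, Fintype.sum_bool]
    have hcy : ∀ y : Bool, (∑ x ∈ univ.filter (fun x => (β x && γ (σ x)) = true), p x y)
        = ∑ s, ∑ x ∈ univ.filter (fun x => σ x = s ∧ (β x && γ (σ x)) = true), p x y :=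
      fun y => (sum_fiber_filter σ (fun x => p x y) _).symm
    have hmt : (∑ x, p x true) = ∑ s, ∑ x ∈ univ.filter (fun x => σ x = s), p x true :=
      (Finset.sum_fiberwise univ σ (fun x => p x true)).symm
    have htrue : (∑ x, if (true : Bool) ≠ (β x && γ (σ x)) then p x true else 0)
        = (∑ x, p x true) - ∑ x ∈ univ.filter (fun x => (β x && γ (σ x)) = true), p x true := by
      rw [← Finset.sum_filter]
      have he : univ.filter (fun x => (true : Bool) ≠ (β x && γ (σ x)))
          = univ.filter (fun x => ¬ ((β x && γ (σ x)) = true)) :=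
        Finset.filter_congr (fun x _ => ne_comm)
      rw [he]
      have := Finset.sum_filter_add_sum_filter_not univ
        (fun x => (β x && γ (σ x)) = true) (fun x => p x true)
      linarith
    have hfalse : (∑ x, if (false : Bool) ≠ (β x && γ (σ x)) then p x false else 0)
        = ∑ x ∈ univ.filter (fun x => (β x && γ (σ x)) = true), p x false := by
      rw [← Finset.sum_filter]
      congr 1
      apply Finset.filter_congr
      intro x _
      cases h : (β x && γ (σ x)) <;> simp [h]
    rw [htrue, hfalse, hcy true, hcy false, hmt]
    ring
  -- rewrite q
  have hq : (∑ x ∈ univ.filter (fun x => (β x && γ (σ x)) = true), ∑ y, p x y)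
      = ∑ s, ∑ y, ∑ x ∈ univ.filter (fun x => σ x = s ∧ (β x && γ (σ x)) = true), p x y := by
    rw [← sum_fiber_filter σ (fun x => ∑ y, p x y) (fun x => (β x && γ (σ x)) = true)]
    exact Finset.sum_congr rfl (fun s _ => (Finset.sum_comm).symm)
  -- rewrite T2
  have haeq : ∀ s : S, (∑ x ∈ univ.filter (fun x => σ x = s ∧ (β x && γ (σ x)) = true), ∑ y, p x y)
      = ∑ y, ∑ x ∈ univ.filter (fun x => σ x = s ∧ (β x && γ (σ x)) = true), p x y :=
    fun s => Finset.sum_comm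
  have hpseq : ∀ s : S, (∑ x ∈ univ.filter (fun x => σ x = s), ∑ y, p x y)
      = ∑ y, ∑ x ∈ univ.filter (fun x => σ x = s), p x y :=
    fun s => Finset.sum_comm
  have ha0' : ∀ s : S, 0 ≤ ∑ x ∈ univ.filter (fun x => σ x = s ∧ (β x && γ (σ x)) = true), ∑ y, p x y :=
    fun s => Finset.sum_nonneg (fun x _ => Finset.sum_nonneg (fun y _ => hp x y))
  have hale : ∀ s : S, (∑ x ∈ univ.filter (fun x => σ x = s ∧ (β x && γ (σ x)) = true), ∑ y, p x y)
      ≤ ∑ x ∈ univ.filter (fun x => σ x = s), ∑ y, p x y := by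
    intro s
    apply Finset.sum_le_sum_of_subset_of_nonneg
    · exact Finset.monotone_filter_right univ (fun x _ hx => hx.1)
    · intro x _ _; exact Finset.sum_nonneg (fun y _ => hp x y)
  have hT2 : (∑ s, (∑ x ∈ univ.filter (fun x => σ x = s), ∑ y, p x y) *
        binEnt ((∑ x ∈ univ.filter (fun x => σ x = s ∧ (β x && γ (σ x)) = true), ∑ y, p x y)
          / (∑ x ∈ univ.filter (fun x => σ x = s), ∑ y, p x y)))
      = ∑ s, (Real.negMulLog (∑ y, ∑ x ∈ univ.filter (fun x => σ x = s ∧ (β x && γ (σ x)) = true), p x y)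
            + Real.negMulLog ((∑ y, ∑ x ∈ univ.filter (fun x => σ x = s), p x y)
              - ∑ y, ∑ x ∈ univ.filter (fun x => σ x = s ∧ (β x && γ (σ x)) = true), p x y)
            - Real.negMulLog (∑ y, ∑ x ∈ univ.filter (fun x => σ x = s), p x y)) := by
    apply Finset.sum_congr rfl
    intro s _
    rw [← haeq s, ← hpseq s]
    exact mul_binEnt_div (ha0' s) (hale s)
  -- T2 ≤ T1
  have hT2T1 : (∑ s, (∑ x ∈ univ.filter (fun x => σ x = s), ∑ y, p x y) *
        binEnt ((∑ x ∈ univ.filter (fun x => σ x = s ∧ (β x && γ (σ x)) = true), ∑ y, p x y)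
          / (∑ x ∈ univ.filter (fun x => σ x = s), ∑ y, p x y)))
      ≤ ∑ b : Bool, (∑ x ∈ univ.filter (fun x => γ (σ x) = b), ∑ y, p x y) *
          binEnt ((∑ x ∈ univ.filter (fun x => γ (σ x) = b ∧ β x = true), ∑ y, p x y)
            / (∑ x ∈ univ.filter (fun x => γ (σ x) = b), ∑ y, p x y)) := by
    -- abbreviate
    set F : S → ℝ := fun s => (∑ x ∈ univ.filter (fun x => σ x = s), ∑ y, p x y) *
        binEnt ((∑ x ∈ univ.filter (fun x => σ x = s ∧ (β x && γ (σ x)) = true), ∑ y, p x y)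
          / (∑ x ∈ univ.filter (fun x => σ x = s), ∑ y, p x y)) with hF
    have hsplitS : ∑ s, F s = ∑ b : Bool, ∑ s ∈ univ.filter (fun s => γ s = b), F s :=
      (Finset.sum_fiberwise univ γ F).symm
    rw [hsplitS, Fintype.sum_bool, Fintype.sum_bool]
    have hAb0 : ∀ b : Bool, 0 ≤ ∑ x ∈ univ.filter (fun x => γ (σ x) = b ∧ β x = true), ∑ y, p x y :=
      fun b => Finset.sum_nonneg (fun x _ => Finset.sum_nonneg (fun y _ => hp x y))
    have hAble : ∀ b : Bool, (∑ x ∈ univ.filter (fun x => γ (σ x) = b ∧ β x = true), ∑ y, p x y)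
        ≤ ∑ x ∈ univ.filter (fun x => γ (σ x) = b), ∑ y, p x y := by
      intro b
      apply Finset.sum_le_sum_of_subset_of_nonneg
      · exact Finset.monotone_filter_right univ (fun x _ hx => hx.1)
      · intro x _ _; exact Finset.sum_nonneg (fun y _ => hp x y)
    have hterm : ∀ b : Bool, (∑ x ∈ univ.filter (fun x => γ (σ x) = b), ∑ y, p x y) *
          binEnt ((∑ x ∈ univ.filter (fun x => γ (σ x) = b ∧ β x = true), ∑ y, p x y)
            / (∑ x ∈ univ.filter (fun x => γ (σ x) = b), ∑ y, p x y))
        = Real.negMulLog (∑ x ∈ univ.filter (fun x => γ (σ x) = b ∧ β x = true), ∑ y, p x y)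
          + Real.negMulLog ((∑ x ∈ univ.filter (fun x => γ (σ x) = b), ∑ y, p x y)
            - ∑ x ∈ univ.filter (fun x => γ (σ x) = b ∧ β x = true), ∑ y, p x y)
          - Real.negMulLog (∑ x ∈ univ.filter (fun x => γ (σ x) = b), ∑ y, p x y) :=
      fun b => mul_binEnt_div (hAb0 b) (hAble b)
    -- the false fiber of T2 vanishes
    have hfalse0 : ∑ s ∈ univ.filter (fun s => γ s = false), F s = 0 := by
      apply Finset.sum_eq_zero
      intro s hs
      rw [Finset.mem_filter] at hs
      have hembed : (∑ x ∈ univ.filter (fun x => σ x = s ∧ (β x && γ (σ x)) = true), ∑ y, p x y) = 0 := by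
        apply Finset.sum_eq_zero
        intro x hx
        rw [Finset.mem_filter] at hx
        exfalso
        have := hx.2.2
        rw [Bool.and_eq_true] at this
        rw [hx.2.1, hs.2] at this
        exact Bool.false_ne_true this.2
      rw [hF]
      simp only [hembed, zero_div]
      have : binEnt 0 = 0 := by simp [binEnt]
      rw [this, mul_zero]
    -- the false term of T1 is nonnegative
    have hfalseT1 : 0 ≤ (∑ x ∈ univ.filter (fun x => γ (σ x) = false), ∑ y, p x y) *
          binEnt ((∑ x ∈ univ.filter (fun x => γ (σ x) = false ∧ β x = true), ∑ y, p x y)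
            / (∑ x ∈ univ.filter (fun x => γ (σ x) = false), ∑ y, p x y)) := by
      rw [hterm false]
      have h := negMulLog_add_le'' (hAb0 false) (by linarith [hAble false] :
        (0:ℝ) ≤ (∑ x ∈ univ.filter (fun x => γ (σ x) = false), ∑ y, p x y)
          - ∑ x ∈ univ.filter (fun x => γ (σ x) = false ∧ β x = true), ∑ y, p x y)
      have he : (∑ x ∈ univ.filter (fun x => γ (σ x) = false ∧ β x = true), ∑ y, p x y)
          + ((∑ x ∈ univ.filter (fun x => γ (σ x) = false), ∑ y, p x y)
            - ∑ x ∈ univ.filter (fun x => γ (σ x) = false ∧ β x = true), ∑ y, p x y)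
          = ∑ x ∈ univ.filter (fun x => γ (σ x) = false), ∑ y, p x y := by ring
      rw [he] at h
      linarith
    -- the true fiber: grouping inequality via ent_submod
    have htrueT : ∑ s ∈ univ.filter (fun s => γ s = true), F s
        ≤ (∑ x ∈ univ.filter (fun x => γ (σ x) = true), ∑ y, p x y) *
            binEnt ((∑ x ∈ univ.filter (fun x => γ (σ x) = true ∧ β x = true), ∑ y, p x y)
              / (∑ x ∈ univ.filter (fun x => γ (σ x) = true), ∑ y, p x y)) := by
      rw [hterm true]
      -- per-s numerators / denominators
      set a : S → ℝ := fun s => ∑ x ∈ univ.filter (fun x => σ x = s ∧ (β x && γ (σ x)) = true), ∑ y, p x y with haa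
      set ps : S → ℝ := fun s => ∑ x ∈ univ.filter (fun x => σ x = s), ∑ y, p x y with hpsps
      have hFs : ∀ s, F s = Real.negMulLog (a s) + Real.negMulLog (ps s - a s)
          - Real.negMulLog (ps s) := by
        intro s
        rw [hF]
        exact mul_binEnt_div (ha0' s) (hale s)
      -- column sums over the fiber
      have hAtrue : (∑ x ∈ univ.filter (fun x => γ (σ x) = true ∧ β x = true), ∑ y, p x y)
          = ∑ s ∈ univ.filter (fun s => γ s = true), a s := by
        rw [sum_filter_restrict σ (fun x => ∑ y, p x y)
          (fun x => γ (σ x) = true ∧ β x = true) (fun s => γ s = true)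
          (fun x hx => hx.1)]
        apply Finset.sum_congr rfl
        intro s _
        congr 1
        apply Finset.filter_congr
        intro x _
        constructor
        · rintro ⟨h1, h2, h3⟩
          exact ⟨h1, by rw [Bool.and_eq_true]; exact ⟨h3, h2⟩⟩
        · rintro ⟨h1, h2⟩
          rw [Bool.and_eq_true] at h2
          exact ⟨h1, h2.2, h2.1⟩
      have hPtrue : (∑ x ∈ univ.filter (fun x => γ (σ x) = true), ∑ y, p x y)
          = ∑ s ∈ univ.filter (fun s => γ s = true), ps s := by
        rw [sum_filter_restrict σ (fun x => ∑ y, p x y)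
          (fun x => γ (σ x) = true) (fun s => γ s = true) (fun x hx => hx)]
        apply Finset.sum_congr rfl
        intro s hs
        rw [Finset.mem_filter] at hs
        congr 1
        apply Finset.filter_congr
        intro x _
        constructor
        · rintro ⟨h1, _⟩; exact h1
        · intro h1; exact ⟨h1, by rw [h1]; exact hs.2⟩
      -- submodularity on the fiber
      have H := ent_submod (univ.filter (fun s => γ s = true)) (univ : Finset Bool)
        (fun s k => if k then a s else ps s - a s)
        (by intro s _ k _
            rcases k
            · simp only [if_neg Bool.false_ne_true]
              have := hale s
              simp only [haa, hpsps]
              linarith [hale s]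
            · simp only [if_pos rfl]
              exact ha0' s)
      have hrow : ∀ s, (∑ k : Bool, if k then a s else ps s - a s) = ps s := by
        intro s
        rw [Fintype.sum_bool]
        simp
      have hcolt : (∑ s ∈ univ.filter (fun s => γ s = true), if (true : Bool) then a s else ps s - a s)
          = ∑ s ∈ univ.filter (fun s => γ s = true), a s := by
        apply Finset.sum_congr rfl; intro s _; simp
      have hcolf : (∑ s ∈ univ.filter (fun s => γ s = true), if (false : Bool) then a s else ps s - a s)
          = (∑ s ∈ univ.filter (fun s => γ s = true), ps s)
            - ∑ s ∈ univ.filter (fun s => γ s = true), a s := by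
        rw [← Finset.sum_sub_distrib]
        apply Finset.sum_congr rfl; intro s _; simp
      rw [Finset.sum_congr rfl (fun s _ => congrArg Real.negMulLog (hrow s))] at H
      rw [Fintype.sum_bool, hcolt, hcolf] at H
      have hinner : ∀ s, (∑ k : Bool, Real.negMulLog (if k then a s else ps s - a s))
          = Real.negMulLog (a s) + Real.negMulLog (ps s - a s) := by
        intro s
        rw [Fintype.sum_bool]
        simp
      rw [Finset.sum_congr rfl (fun s _ => hinner s)] at H
      have htotfib : (∑ s ∈ univ.filter (fun s => γ s = true), ∑ k : Bool, if k then a s else ps s - a s)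
          = ∑ s ∈ univ.filter (fun s => γ s = true), ps s := by
        exact Finset.sum_congr rfl (fun s _ => hrow s)
      rw [htotfib] at H
      rw [Finset.sum_add_distrib] at H
      rw [Finset.sum_congr rfl (fun s _ => hFs s)]
      rw [Finset.sum_sub_distrib, Finset.sum_add_distrib]
      rw [hAtrue, hPtrue]
      linarith [H]
    have hfin := add_le_add htrueT (le_of_eq hfalse0)
    linarith [hfin, hfalseT1]
  -- final combination
  rw [min_eq_right hT2T1]
  rw [hPe, hq, hT2]
  exact key
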